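/- Every graded poset admitting a dual EL-labeling admits a recursive coatom ordering. -/

import Mathlib

set_option linter.unusedSectionVars false


section Posets

variable {P : Type*} [PartialOrder P]

/-- `a` covers `b` within the subposet `Q`. -/
def covIn (Q : Set P) (a b : P) : Prop :=
  a ∈ Q ∧ b ∈ Q ∧ b < a ∧ ∀ z ∈ Q, ¬ (b < z ∧ z < a)

/-- `l` is a maximal (saturated) chain in `Q`, listed from its top `a` down to its bottom `b`,
consecutive entries being covering relations inside `Q`. -/
def MaxChainIn (Q : Set P) (a b : P) (l : List P) : Prop :=
  (∀ x ∈ l, x ∈ Q) ∧ l.Chain' (fun x y => covIn Q x y) ∧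
    l.head? = some a ∧ l.getLast? = some b

def hasMinEl (Q : Set P) (m : P) : Prop := m ∈ Q ∧ ∀ z ∈ Q, m ≤ z

def hasMaxEl (Q : Set P) (M : P) : Prop := M ∈ Q ∧ ∀ z ∈ Q, z ≤ M

def IsMaximalIn (Q : Set P) (x : P) : Prop := x ∈ Q ∧ ∀ z ∈ Q, x ≤ z → z = x

/-- In the subposet `Q` with minimal element `m`, the element `z` has length `N`:
some maximal chain of `{y ∈ Q | y ≤ z}` from `z` down to `m` exists and every
such chain has `N` covering steps (hence `N+1` entries). -/
def lengthEq (Q : Set P) (m z : P) (N : ℕ) : Prop :=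
  (∃ l, MaxChainIn {y | y ∈ Q ∧ y ≤ z} z m l) ∧
    ∀ l, MaxChainIn {y | y ∈ Q ∧ y ≤ z} z m l → l.length = N + 1

/-- Görtz's recursive notion of an `N`-Cohen-Macaulay (pure, with unique minimal element) poset. -/
def IsCM : ℕ → Set P → Prop
  | 0, Q => ∃ m, hasMinEl Q m ∧ ∃ x, IsMaximalIn Q x ∧ (∀ y, IsMaximalIn Q y → y = x) ∧
      lengthEq Q m x 0
  | (N+1), Q => ∃ m, hasMinEl Q m ∧
      ((∃ x, IsMaximalIn Q x ∧ (∀ y, IsMaximalIn Q y → y = x) ∧ lengthEq Q m x (N+1)) ∨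
       (∃ k, 2 ≤ k ∧ ∃ x : Fin k → P, Function.Injective x ∧
          (∀ i, IsMaximalIn Q (x i)) ∧ (∀ y, IsMaximalIn Q y → ∃ i, x i = y) ∧
          (∀ i, lengthEq Q m (x i) (N+1)) ∧
          ∀ j : Fin k, 0 < (j : ℕ) →
            IsCM N ({y | y ∈ Q ∧ y ≤ x j} ∩
              {y | ∃ i : Fin k, (i : ℕ) < (j : ℕ) ∧ y ∈ Q ∧ y ≤ x i})))

variable {Λ : Type*} [LinearOrder Λ]

/-- The word of edge labels of a chain (read from top to bottom). -/
def labelsOf (η : P → P → Λ) (l : List P) : List Λ :=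
  (l.zip l.tail).map fun p => η p.1 p.2

/-- A dual EL-labeling: every interval has a unique label-increasing maximal chain,
which is moreover lexicographically smallest among all maximal chains of the interval. -/
def IsDualEL (η : P → P → Λ) : Prop :=
  ∀ w w' : P, w ≤ w' →
    ∃ l, MaxChainIn {y | w ≤ y ∧ y ≤ w'} w' w l ∧ (labelsOf η l).Chain' (· ≤ ·) ∧
      (∀ l', MaxChainIn {y | w ≤ y ∧ y ≤ w'} w' w l' →
        (labelsOf η l').Chain' (· ≤ ·) → l' = l) ∧
      (∀ l', MaxChainIn {y | w ≤ y ∧ y ≤ w'} w' w l' → l' ≠ l →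
        List.Lex (· < ·) (labelsOf η l) (labelsOf η l'))

end Posets

section Helpers
variable {P : Type*} [PartialOrder P]
namespace RCOhelp

variable {P : Type*} [PartialOrder P]

/-- descending saturated chain -/
def DChain (l : List P) : Prop := l.Chain' (fun a b => b ⋖ a)

lemma dchain_cons {a : P} {l : List P} :
    DChain (a :: l) ↔ (∀ b ∈ l.head?, b ⋖ a) ∧ DChain l := List.isChain_cons

lemma ordConn {S : Set P} (h : ∀ x ∈ S, ∀ y ∈ S, ∀ v, x ≤ v → v ≤ y → v ∈ S) :
    S.OrdConnected := ⟨fun x hx y hy v hv => h x hx y hy v hv.1 hv.2⟩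

lemma covIn_iff {S : Set P} (hS : S.OrdConnected) {a b : P} :
    covIn S a b ↔ a ∈ S ∧ b ∈ S ∧ b ⋖ a := by
  constructor
  · rintro ⟨ha, hb, hlt, hmid⟩
    exact ⟨ha, hb, hlt, fun v hv1 hv2 =>
      hmid v (hS.out hb ha ⟨hv1.le, hv2.le⟩) ⟨hv1, hv2⟩⟩
  · rintro ⟨ha, hb, hlt⟩
    exact ⟨ha, hb, hlt.lt, fun v _ hv => hlt.2 hv.1 hv.2⟩

lemma chain'_covIn_iff {S : Set P} (hS : S.OrdConnected) :
    ∀ l : List P, (∀ x ∈ l, x ∈ S) → (l.Chain' (covIn S) ↔ DChain l) := by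
  intro l
  induction l with
  | nil => intro _; simp [DChain, List.Chain']
  | cons a t ih =>
    intro hl
    cases t with
    | nil => simp [DChain, List.Chain']
    | cons b t' =>
      have ha : a ∈ S := hl a (by simp)
      have hb : b ∈ S := hl b (by simp)
      have ht : ∀ x ∈ b :: t', x ∈ S := fun x hx => hl x (by simp [hx])
      unfold DChain List.Chain'
      rw [List.isChain_cons_cons, List.isChain_cons_cons]
      constructor
      · rintro ⟨h1, h2⟩
        exact ⟨((covIn_iff hS).1 h1).2.2, (ih ht).1 h2⟩
      · rintro ⟨h1, h2⟩
        exact ⟨(covIn_iff hS).2 ⟨ha, hb, h1⟩, (ih ht).2 h2⟩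

lemma dchain_le_head : ∀ (l : List P), DChain l → ∀ a, l.head? = some a → ∀ x ∈ l, x ≤ a := by
  intro l
  induction l with
  | nil => simp
  | cons c t ih =>
    intro hch a ha x hx
    rw [List.head?_cons, Option.some_inj] at ha
    subst ha
    rcases List.mem_cons.1 hx with rfl | hx
    · exact le_rfl
    · cases t with
      | nil => simp at hx
      | cons b t' =>
        have hcov : b ⋖ c := (List.isChain_cons_cons.1 hch).1
        exact le_trans (ih (List.isChain_cons_cons.1 hch).2 b rfl x hx) hcov.le

lemma dchain_ge_last : ∀ (l : List P), DChain l → ∀ b, l.getLast? = some b → ∀ x ∈ l, b ≤ x := by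
  intro l
  induction l with
  | nil => simp
  | cons c t ih =>
    intro hch b hb x hx
    cases t with
    | nil =>
      simp only [List.getLast?_singleton, Option.some_inj] at hb
      subst hb
      simp at hx
      subst hx
      exact le_rfl
    | cons d t' =>
      have hb' : (d :: t').getLast? = some b := by
        rwa [List.getLast?_cons_cons] at hb
      have hcov : d ⋖ c := (List.isChain_cons_cons.1 hch).1
      rcases List.mem_cons.1 hx with rfl | hx
      · exact le_trans (ih (List.isChain_cons_cons.1 hch).2 b hb' d (by simp)) hcov.le
      · exact ih (List.isChain_cons_cons.1 hch).2 b hb' x hx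

lemma maxChainIn_iff {S : Set P} (hS : S.OrdConnected) {a b : P} (ha : a ∈ S) (hb : b ∈ S)
    {l : List P} :
    MaxChainIn S a b l ↔ DChain l ∧ l.head? = some a ∧ l.getLast? = some b := by
  constructor
  · rintro ⟨hmem, hch, h1, h2⟩
    exact ⟨(chain'_covIn_iff hS l hmem).1 hch, h1, h2⟩
  · rintro ⟨hch, h1, h2⟩
    have hmem : ∀ x ∈ l, x ∈ S := fun x hx =>
      hS.out hb ha ⟨dchain_ge_last l hch b h2 x hx, dchain_le_head l hch a h1 x hx⟩
    exact ⟨hmem, (chain'_covIn_iff hS l hmem).2 hch, h1, h2⟩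

lemma dchain_splice {l1 l2 : List P} {m : P} (h1 : DChain l1) (h2 : DChain l2)
    (hl1 : l1.getLast? = some m) (hl2 : l2.head? = some m) :
    DChain (l1 ++ l2.tail) ∧ (l1 ++ l2.tail).head? = l1.head? ∧
    (l1 ++ l2.tail).getLast? = l2.getLast? ∧
    (l1 ++ l2.tail).length + 1 = l1.length + l2.length := by
  cases l2 with
  | nil => simp at hl2
  | cons m' t =>
    rw [List.head?_cons, Option.some_inj] at hl2
    subst hl2
    cases l1 with
    | nil => simp at hl1
    | cons a t1 =>
      refine ⟨?_, ?_, ?_, ?_⟩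
      · refine List.IsChain.append h1 ((dchain_cons.1 h2).2) ?_
        intro x hx y hy
        rw [hl1, Option.mem_def, Option.some_inj] at hx
        subst hx
        exact (dchain_cons.1 h2).1 y hy
      · simp
      · cases t with
        | nil => simpa using hl1
        | cons d t' =>
          rw [List.getLast?_append_of_ne_nil _ (by simp)]
          simp
      · simp [List.length_append]; omega

lemma exists_dchain [Fintype P] : ∀ (a b : P), b ≤ a →
    ∃ l, DChain l ∧ l.head? = some a ∧ l.getLast? = some b := by
  intro a
  induction a using WellFoundedLT.induction with
  | _ a ih =>
    intro b hba
    rcases eq_or_lt_of_le hba with rfl | hlt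
    · exact ⟨[b], by simp [DChain, List.Chain'], rfl, rfl⟩
    · obtain ⟨u, hu, hmax⟩ := Set.Finite.exists_maximalFor id {v | b ≤ v ∧ v < a}
        (Set.toFinite _) ⟨b, le_rfl, hlt⟩
      have hcov : u ⋖ a := by
        refine ⟨hu.2, fun v hv1 hv2 => ?_⟩
        have := hmax (j := v) ⟨le_trans hu.1 hv1.le, hv2⟩ hv1.le
        simp only [id] at this
        exact absurd (lt_of_lt_of_le hv1 this) (lt_irrefl u)
      obtain ⟨l, hl, hh, hlast⟩ := ih u hu.2 b hu.1
      refine ⟨a :: l, dchain_cons.2 ⟨fun c hc => ?_, hl⟩, rfl, ?_⟩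
      · rw [hh, Option.mem_def, Option.some_inj] at hc; subst hc; exact hcov
      · rw [List.getLast?_cons, hlast]; rfl

end RCOhelp

end Helpers
section Posets2

variable {P : Type*} [PartialOrder P]

namespace RCOhelp

section Graded

variable [Fintype P] [OrderBot P]

/-- every saturated chain from `z` to `⊥` has `M+1` entries. -/
def gto (z : P) (M : ℕ) : Prop :=
  ∀ l : List P, DChain l → l.head? = some z → l.getLast? = some ⊥ → l.length = M + 1

lemma lengthEq_iff_gto {z : P} {M : ℕ} :
    lengthEq (Set.univ : Set P) ⊥ z M ↔ gto z M := by
  have hS : ({y : P | y ∈ Set.univ ∧ y ≤ z} : Set P).OrdConnected :=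
    ordConn (fun x hx y hy v h1 h2 => ⟨trivial, le_trans h2 hy.2⟩)
  have hzS : z ∈ {y : P | y ∈ Set.univ ∧ y ≤ z} := ⟨trivial, le_rfl⟩
  have hbS : (⊥ : P) ∈ {y : P | y ∈ Set.univ ∧ y ≤ z} := ⟨trivial, bot_le⟩
  constructor
  · rintro ⟨-, huniq⟩ l hl h1 h2
    exact huniq l ((maxChainIn_iff hS hzS hbS).2 ⟨hl, h1, h2⟩)
  · intro h
    obtain ⟨l, hl, h1, h2⟩ := exists_dchain z ⊥ bot_le
    exact ⟨⟨l, (maxChainIn_iff hS hzS hbS).2 ⟨hl, h1, h2⟩⟩,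
      fun l' hl' => by
        obtain ⟨hd, hh1, hh2⟩ := (maxChainIn_iff hS hzS hbS).1 hl'
        exact h l' hd hh1 hh2⟩

lemma gto_covby {z x : P} {M : ℕ} (h : gto z (M + 1)) (hc : x ⋖ z) : gto x M := by
  intro l hl h1 h2
  have hz : DChain (z :: l) := dchain_cons.2 ⟨fun b hb => by
    rw [h1, Option.mem_def, Option.some_inj] at hb; subst hb; exact hc, hl⟩
  have := h (z :: l) hz rfl (by rw [List.getLast?_cons, h2]; rfl)
  simpa using this

lemma chain_length_eq {z w : P} {M D : ℕ} (hz : gto z M) (hw : gto w D) :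
    ∀ l : List P, DChain l → l.head? = some z → l.getLast? = some w →
      l.length + D = M + 1 := by
  obtain ⟨d, hd, hd1, hd2⟩ := exists_dchain w ⊥ bot_le
  have hdlen : d.length = D + 1 := hw d hd hd1 hd2
  intro l hl h1 h2
  obtain ⟨hD, hh, hla, hlen⟩ := dchain_splice hl hd h2 hd1
  have := hz (l ++ d.tail) hD (by rw [hh, h1]) (by rw [hla, hd2])
  omega

lemma chain_length_three {z xj w : P} {K : ℕ} (hz : gto z (K + 2)) (hjz : xj ⋖ z)
    (hwj : w ⋖ xj) :
    ∀ l : List P, DChain l → l.head? = some z → l.getLast? = some w → l.length = 3 := by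
  have hw : gto w K := gto_covby (gto_covby hz hjz) hwj
  intro l hl h1 h2
  have := chain_length_eq hz hw l hl h1 h2
  omega

end Graded

section Labels

variable {Λ : Type*} [LinearOrder Λ]

lemma labelsOf_cons (η : P → P → Λ) {a b : P} {l : List P} (h : l.head? = some b) :
    labelsOf η (a :: l) = η a b :: labelsOf η l := by
  cases l with
  | nil => simp at h
  | cons c t =>
    rw [List.head?_cons, Option.some_inj] at h
    subst h
    simp [labelsOf]

lemma labelsOf_pair (η : P → P → Λ) (a b : P) : labelsOf η [a, b] = [η a b] := by
  simp [labelsOf]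

lemma labelsOf_triple (η : P → P → Λ) (a b c : P) :
    labelsOf η [a, b, c] = [η a b, η b c] := by
  simp [labelsOf]

lemma lex_nil_nil {r : Λ → Λ → Prop} (h : List.Lex r [] []) : False := by cases h

lemma lex_cons_elim {r : Λ → Λ → Prop} {a b : Λ} {l1 l2 : List Λ}
    (h : List.Lex r (a :: l1) (b :: l2)) : r a b ∨ (a = b ∧ List.Lex r l1 l2) := by
  cases h with
  | rel h => exact Or.inl h
  | cons h => exact Or.inr ⟨rfl, h⟩

lemma lex_pair_elim {a b c d : Λ} (h : List.Lex (· < ·) [a, b] [c, d]) :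
    a < c ∨ (a = c ∧ b < d) := by
  cases h with
  | rel h => exact Or.inl h
  | cons h' =>
    cases h' with
    | rel h => exact Or.inr ⟨rfl, h⟩
    | cons h => exact absurd h lex_nil_nil

end Labels

end RCOhelp

end Posets2



section Core

namespace RCOhelp

variable {P : Type*} [PartialOrder P] {Λ : Type*} [LinearOrder Λ] {η : P → P → Λ}

lemma EL_interval (hEL : IsDualEL η) {w z : P} (hwz : w ≤ z) :
    ∃ c : List P, (DChain c ∧ c.head? = some z ∧ c.getLast? = some w) ∧
      (labelsOf η c).Chain' (· ≤ ·) ∧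
      (∀ l', (DChain l' ∧ l'.head? = some z ∧ l'.getLast? = some w) →
        (labelsOf η l').Chain' (· ≤ ·) → l' = c) ∧
      (∀ l', (DChain l' ∧ l'.head? = some z ∧ l'.getLast? = some w) → l' ≠ c →
        List.Lex (· < ·) (labelsOf η c) (labelsOf η l')) := by
  obtain ⟨c, hc, hinc, huniq, hlex⟩ := hEL w z hwz
  have hS : ({y | w ≤ y ∧ y ≤ z} : Set P).OrdConnected :=
    ordConn (fun x hx y hy v h1 h2 => ⟨le_trans hx.1 h1, le_trans h2 hy.2⟩)
  have hiff : ∀ l : List P, MaxChainIn {y | w ≤ y ∧ y ≤ z} z w l ↔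
      (DChain l ∧ l.head? = some z ∧ l.getLast? = some w) :=
    fun l => maxChainIn_iff hS ⟨hwz, le_rfl⟩ ⟨le_rfl, hwz⟩
  exact ⟨c, (hiff c).1 hc, hinc, fun l' h1 h2 => huniq l' ((hiff l').2 h1) h2,
    fun l' h1 h2 => hlex l' ((hiff l').2 h1) h2⟩

lemma dchain_triple {a b c : P} (h1 : b ⋖ a) (h2 : c ⋖ b) : DChain [a, b, c] := by
  unfold DChain List.Chain'
  rw [List.isChain_cons_cons, List.isChain_cons_cons]
  exact ⟨h1, h2, List.isChain_singleton c⟩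

lemma exists_earlier (hEL : IsDualEL η) {z xj w : P} (hjz : xj ⋖ z) (hwj : w ⋖ xj)
    (h3 : ∀ l : List P, DChain l → l.head? = some z → l.getLast? = some w → l.length = 3)
    (hlab : η xj w < η z xj) :
    ∃ u : P, u ⋖ z ∧ w ⋖ u ∧ η z u < η z xj := by
  obtain ⟨c, ⟨hcD, hch, hcl⟩, hinc, huniq, hlex⟩ := EL_interval hEL (hwj.le.trans hjz.le)
  have hlen : c.length = 3 := h3 c hcD hch hcl
  obtain ⟨a, u, v, rfl⟩ := List.length_eq_three.1 hlen
  have ha : a = z := by simpa using hch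
  obtain rfl := ha.symm
  have hv : v = w := by simpa using hcl
  obtain rfl := hv.symm
  have huz : u ⋖ z := (List.isChain_cons_cons.1 hcD).1
  have hwu : w ⋖ u := (List.isChain_cons_cons.1 (List.isChain_cons_cons.1 hcD).2).1
  rw [labelsOf_triple] at hinc
  have hinc' : η z u ≤ η u w := (List.isChain_cons_cons.1 hinc).1
  by_cases hequ : u = xj
  · subst hequ
    exact absurd hinc' (not_le.2 hlab)
  · have hne : [z, xj, w] ≠ [z, u, w] := by
      intro h
      injection h with h1 h2
      injection h2 with h3 _
      exact hequ h3.symm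
    have hlx := hlex [z, xj, w] ⟨dchain_triple hjz hwj, rfl, by simp⟩ hne
    rw [labelsOf_triple, labelsOf_triple] at hlx
    rcases lex_pair_elim hlx with h | ⟨h1, h2⟩
    · exact ⟨u, huz, hwu, h⟩
    · exact absurd ((hlab.trans_le (h1 ▸ hinc')).trans h2) (lt_irrefl _)

lemma label_lt_of_earlier (hEL : IsDualEL η) {z xi xj w : P} (hiz : xi ⋖ z) (hjz : xj ⋖ z)
    (hwi : w ⋖ xi) (hwj : w ⋖ xj) (hne : xi ≠ xj) (hle : η z xi ≤ η z xj) :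
    η xj w < η z xj := by
  by_contra hcon
  push_neg at hcon
  obtain ⟨c, hcfacts, hinc, huniq, hlex⟩ := EL_interval hEL (hwj.le.trans hjz.le)
  have hl0D : DChain [z, xj, w] := dchain_triple hjz hwj
  have hl0inc : (labelsOf η [z, xj, w]).Chain' (· ≤ ·) := by
    rw [labelsOf_triple]
    exact List.isChain_cons_cons.2 ⟨hcon, List.isChain_singleton _⟩
  have hc0 : [z, xj, w] = c := huniq _ ⟨hl0D, rfl, by simp⟩ hl0inc
  have hliD : DChain [z, xi, w] := dchain_triple hiz hwi
  have hne' : [z, xi, w] ≠ c := by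
    rw [← hc0]
    intro h
    injection h with h1 h2
    injection h2 with h3 _
    exact hne h3
  have hlinotinc : ¬ η z xi ≤ η xi w := by
    intro hx
    have heq := huniq [z, xi, w] ⟨hliD, rfl, by simp⟩
      (by rw [labelsOf_triple]; exact List.isChain_cons_cons.2 ⟨hx, List.isChain_singleton _⟩)
    rw [← hc0] at heq
    injection heq with h1 h2
    injection h2 with h3 _
    exact hne h3
  have hlx := hlex _ ⟨hliD, rfl, by simp⟩ hne'
  rw [← hc0, labelsOf_triple, labelsOf_triple] at hlx
  rcases lex_pair_elim hlx with h | ⟨h1, h2⟩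
  · exact absurd h (not_lt.2 hle)
  · exact absurd (((not_le.1 hlinotinc).trans_le (h1 ▸ hcon)).trans h2) (lt_irrefl _)

lemma exists_low_cover (hEL : IsDualEL η) {z xi xj w : P} (hiz : xi ⋖ z) (hjz : xj ⋖ z)
    (hwi : w < xi) (hwj : w < xj) (hne : xi ≠ xj) (hle : η z xi ≤ η z xj) :
    ∃ u, w ≤ u ∧ u ⋖ xj ∧ η xj u < η z xj := by
  obtain ⟨l, ⟨hlD, hl1, hl2⟩, hlinc, _, _⟩ := EL_interval hEL hwj.le
  obtain ⟨u, t, rfl⟩ : ∃ u t, l = xj :: u :: t := by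
    cases l with
    | nil => simp at hl1
    | cons a t0 =>
      obtain rfl : a = xj := by simpa using hl1
      cases t0 with
      | nil =>
        have : a = w := by simpa using hl2
        exact absurd this.symm hwj.ne
      | cons u t => exact ⟨u, t, rfl⟩
  have hulxj : u ⋖ xj := (List.isChain_cons_cons.1 hlD).1
  have hwu : w ≤ u := dchain_ge_last _ hlD w hl2 u (by simp)
  by_cases hgood : η xj u < η z xj
  · exact ⟨u, hwu, hulxj, hgood⟩
  push_neg at hgood
  exfalso
  obtain ⟨c, hcfacts, hcinc, huniq, hlex⟩ := EL_interval hEL (hwj.le.trans hjz.le)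
  have hzlD : DChain (z :: xj :: u :: t) := by
    refine dchain_cons.2 ⟨?_, hlD⟩
    intro b hb
    rw [List.head?_cons, Option.mem_def, Option.some_inj] at hb
    subst hb
    exact hjz
  have hlabz : labelsOf η (z :: xj :: u :: t) = η z xj :: labelsOf η (xj :: u :: t) :=
    labelsOf_cons η rfl
  have hlabl : labelsOf η (xj :: u :: t) = η xj u :: labelsOf η (u :: t) :=
    labelsOf_cons η rfl
  have hzlinc : (labelsOf η (z :: xj :: u :: t)).Chain' (· ≤ ·) := by
    rw [hlabz]
    refine List.isChain_cons.2 ⟨?_, hlinc⟩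
    intro y hy
    rw [hlabl, List.head?_cons, Option.mem_def, Option.some_inj] at hy
    subst hy
    exact hgood
  have hzlast : (z :: xj :: u :: t).getLast? = some w := by
    rw [List.getLast?_cons, hl2]
    rfl
  have hceq : z :: xj :: u :: t = c := huniq _ ⟨hzlD, rfl, hzlast⟩ hzlinc
  obtain ⟨li, ⟨hliD, hli1, hli2⟩, hliinc, _, _⟩ := EL_interval hEL hwi.le
  obtain ⟨ui, ti, rfl⟩ : ∃ ui ti, li = xi :: ui :: ti := by
    cases li with
    | nil => simp at hli1
    | cons a t0 =>
      obtain rfl : a = xi := by simpa using hli1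
      cases t0 with
      | nil =>
        have : a = w := by simpa using hli2
        exact absurd this.symm hwi.ne
      | cons ui ti => exact ⟨ui, ti, rfl⟩
  have hzliD : DChain (z :: xi :: ui :: ti) := by
    refine dchain_cons.2 ⟨?_, hliD⟩
    intro b hb
    rw [List.head?_cons, Option.mem_def, Option.some_inj] at hb
    subst hb
    exact hiz
  have hzlasti : (z :: xi :: ui :: ti).getLast? = some w := by
    rw [List.getLast?_cons, hli2]
    rfl
  have hne2 : (z :: xi :: ui :: ti) ≠ c := by
    rw [← hceq]
    intro h
    injection h with h1 h2
    injection h2 with h3 _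
    exact hne h3
  have hlabzi : labelsOf η (z :: xi :: ui :: ti) = η z xi :: labelsOf η (xi :: ui :: ti) :=
    labelsOf_cons η rfl
  have hlabli : labelsOf η (xi :: ui :: ti) = η xi ui :: labelsOf η (ui :: ti) :=
    labelsOf_cons η rfl
  have hbad : ¬ η z xi ≤ η xi ui := by
    intro hx
    have hinc2 : (labelsOf η (z :: xi :: ui :: ti)).Chain' (· ≤ ·) := by
      rw [hlabzi]
      refine List.isChain_cons.2 ⟨?_, hliinc⟩
      intro y hy
      rw [hlabli, List.head?_cons, Option.mem_def, Option.some_inj] at hy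
      subst hy
      exact hx
    have heq := huniq _ ⟨hzliD, rfl, hzlasti⟩ hinc2
    rw [← hceq] at heq
    injection heq with h1 h2
    injection h2 with h3 _
    exact hne h3
  have hlx := hlex _ ⟨hzliD, rfl, hzlasti⟩ hne2
  rw [← hceq, hlabz, hlabl, hlabzi, hlabli] at hlx
  rcases lex_cons_elim hlx with h | ⟨h1, hlx2⟩
  · exact absurd h (not_lt.2 hle)
  · rcases lex_cons_elim hlx2 with h | ⟨h2, _⟩
    · exact lt_irrefl _ (((not_le.1 hbad).trans_le (h1 ▸ hgood)).trans h)
    · exact lt_irrefl _ ((not_le.1 hbad).trans_le (h2 ▸ (h1 ▸ hgood)))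

end RCOhelp

end Core

/-- `RCO N Q A` : the graded subposet `Q`, of length `N`, admits a recursive coatom ordering
in which exactly the coatoms belonging to `A` come first. -/
def RCO {P : Type*} [PartialOrder P] : ℕ → Set P → Set P → Prop
  | 0, _, _ => True
  | 1, _, _ => True
  | (N+2), Q, A =>
      ∃ M, hasMaxEl Q M ∧ ∃ t, ∃ x : Fin t → P, Function.Injective x ∧
        (∀ i, covIn Q M (x i)) ∧ (∀ y, covIn Q M y → ∃ i, x i = y) ∧
        (∃ s : ℕ, ∀ i : Fin t, x i ∈ A ↔ (i : ℕ) < s) ∧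
        (∀ j : Fin t, RCO (N+1) {y | y ∈ Q ∧ y ≤ x j}
            {y | covIn {z | z ∈ Q ∧ z ≤ x j} (x j) y ∧
                 ∃ i : Fin t, (i : ℕ) < (j : ℕ) ∧ covIn Q (x i) y}) ∧
        (∀ (i j : Fin t) (w : P), (i : ℕ) < (j : ℕ) → w ∈ Q → w < x i → w < x j →
            ∃ (k : Fin t) (w' : P), (k : ℕ) < (j : ℕ) ∧ w ≤ w' ∧
              covIn Q (x k) w' ∧ covIn Q (x j) w')

namespace RCOhelp

lemma exists_initial_seg {t : ℕ} (p : Fin t → Prop)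
    (hdc : ∀ i j : Fin t, i ≤ j → p j → p i) :
    ∃ s : ℕ, ∀ i : Fin t, p i ↔ (i : ℕ) < s := by
  classical
  have hex : ∃ n : ℕ, ∀ i : Fin t, p i → (i : ℕ) < n := ⟨t, fun i _ => i.isLt⟩
  refine ⟨Nat.find hex, fun i => ⟨fun h => Nat.find_spec hex i h, fun h => ?_⟩⟩
  by_contra hpi
  have hstep : ∀ j : Fin t, p j → (j : ℕ) < (i : ℕ) := by
    intro j hj
    by_contra hji
    push_neg at hji
    exact hpi (hdc i j (Fin.le_def.2 hji) hj)
  exact absurd h (not_lt.2 (Nat.find_le hstep))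

theorem main {P : Type*} [PartialOrder P] [Fintype P] [OrderBot P]
    {Λ : Type*} [LinearOrder Λ] (η : P → P → Λ) (hEL : IsDualEL η) :
    ∀ M : ℕ, ∀ (z : P) (A : Set P), gto z M →
      (∃ c : WithBot Λ, ∀ w : P, w ⋖ z → (w ∈ A ↔ (η z w : WithBot Λ) < c)) →
      RCO M {y | y ≤ z} A := by
  intro M
  induction M using Nat.strong_induction_on with
  | _ M ih =>
    match M, ih with
    | 0, _ => intro z A _ _; simp only [RCO]
    | 1, _ => intro z A _ _; simp only [RCO]
    | (K+2), ih =>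
      intro z A hgr hA
      obtain ⟨cthr, hcthr⟩ := hA
      classical
      set base : List P := (Finset.univ.filter (fun w => w ⋖ z)).toList with hbase
      set l : List P := base.mergeSort (fun a b => decide (η z a ≤ η z b)) with hldef
      have hperm : l.Perm base := List.mergeSort_perm base _
      have hnodup : l.Nodup := hperm.symm.nodup (Finset.nodup_toList _)
      have hmem : ∀ w : P, w ∈ l ↔ w ⋖ z := by
        intro w
        rw [hperm.mem_iff, hbase, Finset.mem_toList, Finset.mem_filter]
        simp
      have hsorted : ∀ i j : Fin l.length, i ≤ j → η z (l.get i) ≤ η z (l.get j) := by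
        have hp := List.pairwise_mergeSort (le := fun a b => decide (η z a ≤ η z b))
          (fun a b c hab hbc => by
            simp only [decide_eq_true_eq] at hab hbc ⊢
            exact le_trans hab hbc)
          (fun a b => by
            simp only [Bool.or_eq_true, decide_eq_true_eq]
            exact le_total _ _)
          base
        rw [← hldef] at hp
        intro i j hij
        rcases eq_or_lt_of_le hij with rfl | hlt
        · exact le_rfl
        · have := List.pairwise_iff_get.1 hp i j hlt
          simpa using this
      have hinj : Function.Injective l.get := List.nodup_iff_injective_get.1 hnodup
      have hcov : ∀ i : Fin l.length, l.get i ⋖ z :=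
        fun i => (hmem _).1 (l.get_mem i)
      have hSz : ({y : P | y ≤ z}).OrdConnected :=
        ordConn (fun x hx y hy v h1 h2 => le_trans h2 hy)
      have hcovIn : ∀ a b : P, a ≤ z → b ≤ z → (covIn {y : P | y ≤ z} a b ↔ b ⋖ a) := by
        intro a b ha hb
        rw [covIn_iff hSz]
        simp only [Set.mem_setOf_eq]
        tauto
      show RCO (K+2) {y | y ≤ z} A
      simp only [RCO]
      refine ⟨z, ⟨le_rfl, fun y hy => hy⟩, l.length, l.get, hinj, ?_, ?_, ?_, ?_, ?_⟩
      · intro i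
        exact (hcovIn z (l.get i) le_rfl (hcov i).le).2 (hcov i)
      · intro y hy
        have hyz : y ⋖ z := (hcovIn z y le_rfl hy.2.1).1 hy
        obtain ⟨n, hn⟩ := List.get_of_mem ((hmem y).2 hyz)
        exact ⟨n, hn⟩
      · apply exists_initial_seg (p := fun i => l.get i ∈ A)
        intro i j hij hpj
        rw [hcthr _ (hcov i)]
        rw [hcthr _ (hcov j)] at hpj
        exact lt_of_le_of_lt (WithBot.coe_le_coe.2 (hsorted i j hij)) hpj
      · -- recursive clause
        intro j
        have hxjz : l.get j ⋖ z := hcov j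
        have hsub : {y : P | y ∈ {y : P | y ≤ z} ∧ y ≤ l.get j} = {y : P | y ≤ l.get j} := by
          ext y
          simp only [Set.mem_setOf_eq]
          exact ⟨fun h => h.2, fun h => ⟨h.trans hxjz.le, h⟩⟩
        rw [hsub]
        refine ih (K+1) (by omega) (l.get j) _ (gto_covby hgr hxjz)
          ⟨(η z (l.get j) : WithBot Λ), ?_⟩
        intro w hw
        rw [WithBot.coe_lt_coe]
        have hSxj : ({y : P | y ≤ l.get j}).OrdConnected :=
          ordConn (fun x hx y hy v h1 h2 => le_trans h2 hy)
        constructor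
        · rintro ⟨hc1, i, hij, hc2⟩
          have hwi : w ⋖ l.get i :=
            (hcovIn (l.get i) w (hcov i).le (hw.le.trans hxjz.le)).1 hc2
          have hne : l.get i ≠ l.get j := by
            intro h
            have := hinj h
            rw [this] at hij
            exact lt_irrefl _ hij
          exact label_lt_of_earlier hEL (hcov i) hxjz hwi hw hne
            (hsorted i j (Fin.le_def.2 (le_of_lt hij)))
        · intro hlab
          obtain ⟨u, huz, hwu, hulab⟩ := exists_earlier hEL hxjz hw
            (chain_length_three hgr hxjz hw) hlab
          obtain ⟨m, hm⟩ := List.get_of_mem ((hmem u).2 huz)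
          have hmj : (m : ℕ) < (j : ℕ) := by
            by_contra hc
            push_neg at hc
            have := hsorted j m (Fin.le_def.2 hc)
            rw [hm] at this
            exact absurd hulab (not_lt.2 this)
          refine ⟨?_, m, hmj, ?_⟩
          · exact (covIn_iff hSxj).2 ⟨le_rfl, hw.le, hw⟩
          · exact (hcovIn (l.get m) w (hcov m).le (hw.le.trans hxjz.le)).2 (hm ▸ hwu)
      · -- condition (ii)
        intro i j w hij hwQ hwi hwj
        have hne : l.get i ≠ l.get j := by
          intro h
          have := hinj h
          rw [this] at hij
          exact lt_irrefl _ hij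
        have hle : η z (l.get i) ≤ η z (l.get j) :=
          hsorted i j (Fin.le_def.2 (le_of_lt hij))
        obtain ⟨u, hwu, huxj, hulab⟩ :=
          exists_low_cover hEL (hcov i) (hcov j) hwi hwj hne hle
        obtain ⟨v, hvz, huv, hvlab⟩ := exists_earlier hEL (hcov j) huxj
          (chain_length_three hgr (hcov j) huxj) hulab
        obtain ⟨k, hk⟩ := List.get_of_mem ((hmem v).2 hvz)
        have hkj : (k : ℕ) < (j : ℕ) := by
          by_contra hc
          push_neg at hc
          have := hsorted j k (Fin.le_def.2 hc)
          rw [hk] at this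
          exact absurd hvlab (not_lt.2 this)
        refine ⟨k, u, hkj, hwu, ?_, ?_⟩
        · exact (hcovIn (l.get k) u (hcov k).le (huxj.le.trans (hcov j).le)).2 (hk ▸ huv)
        · exact (hcovIn (l.get j) u (hcov j).le (huxj.le.trans (hcov j).le)).2 huxj

end RCOhelp

/-- Every graded poset admitting a dual EL-labeling admits a
recursive coatom ordering. -/
theorem dualEL_implies_recursiveCoatomOrdering {P : Type*} [PartialOrder P] [Fintype P]
    [BoundedOrder P] {Λ : Type*} [LinearOrder Λ] (N : ℕ)
    (hgraded : lengthEq (Set.univ : Set P) ⊥ ⊤ N)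
    (η : P → P → Λ) (hEL : IsDualEL η) :
    RCO N (Set.univ : Set P) ∅ := by
  have hset : {y : P | y ≤ (⊤ : P)} = (Set.univ : Set P) := by
    ext y; simp
  have h := RCOhelp.main η hEL N ⊤ ∅ (RCOhelp.lengthEq_iff_gto.1 hgraded)
    ⟨⊥, by intro w _; simp⟩
  rwa [hset] at h
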